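/- Every Σ₁-definable language over Σ (i.e., a language defined by a first-order sentence of the form ∃x₁…∃xₙ ψ with ψ quantifier-free) is ADT₀-definable. -/

import Mathlib

namespace ADTpaper

/-- Propositional formulas over a set `P` of propositional variables. -/
inductive PropForm (P : Type) : Type where
  | var : P → PropForm P
  | tru : PropForm P
  | fls : PropForm P
  | neg : PropForm P → PropForm P
  | conj : PropForm P → PropForm P → PropForm P
  | disj : PropForm P → PropForm P → PropForm P

/-- A valuation is a subset of `P` (an element of the alphabet `Σ = 2^P`). -/
abbrev Val (P : Type) : Type := Set P

/-- A trace is a finite word over the alphabet `Σ = 2^P`. -/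
abbrev Trace (P : Type) : Type := List (Val P)

/-- Satisfaction of a propositional formula by a valuation. -/
def PropForm.eval {P : Type} (v : Val P) : PropForm P → Prop
  | .var p => p ∈ v
  | .tru => True
  | .fls => False
  | .neg φ => ¬ PropForm.eval v φ
  | .conj φ ψ => PropForm.eval v φ ∧ PropForm.eval v ψ
  | .disj φ ψ => PropForm.eval v φ ∨ PropForm.eval v ψ

/-- Size of a propositional formula. -/
def PropForm.size {P : Type} : PropForm P → ℕ
  | .var _ => 1
  | .tru => 1
  | .fls => 1
  | .neg φ => PropForm.size φ + 1
  | .conj φ ψ => PropForm.size φ + PropForm.size ψ + 1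
  | .disj φ ψ => PropForm.size φ + PropForm.size ψ + 1

/-- Attack-defense trees over `P` (operators taken binary, w.l.o.g. by associativity). -/
inductive ADT (P : Type) : Type where
  | eps  : ADT P
  | leaf : PropForm P → ADT P
  | orA  : ADT P → ADT P → ADT P
  | sand : ADT P → ADT P → ADT P
  | andA : ADT P → ADT P → ADT P
  | cm   : ADT P → ADT P → ADT P

/-- Trace semantics of an adt: a language over the alphabet `Σ = 2^P`. -/
def sem {P : Type} : ADT P → Language (Val P)
  | .eps => 1
  | .leaf γ => {w | ∃ w' v, w = w' ++ [v] ∧ PropForm.eval v γ}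
  | .orA t₁ t₂ => sem t₁ ⊔ sem t₂
  | .sand t₁ t₂ => sem t₁ * sem t₂
  | .andA t₁ t₂ => (sem t₁ * ⊤ ⊓ sem t₂) ⊔ (sem t₂ * ⊤ ⊓ sem t₁)
  | .cm t₁ t₂ => sem t₁ \ sem t₂

/-- Countermeasure-depth of an adt. -/
def cd {P : Type} : ADT P → ℕ
  | .eps => 0
  | .leaf _ => 0
  | .orA t₁ t₂ => max (cd t₁) (cd t₂)
  | .sand t₁ t₂ => max (cd t₁) (cd t₂)
  | .andA t₁ t₂ => max (cd t₁) (cd t₂)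
  | .cm t₁ t₂ => max (cd t₁) (cd t₂ + 1)

/-- The size of an adt: the sum of the sizes of its leaves, the leaf `ε` having size 1. -/
def ADT.size {P : Type} : ADT P → ℕ
  | .eps => 1
  | .leaf γ => PropForm.size γ
  | .orA t₁ t₂ => ADT.size t₁ + ADT.size t₂
  | .sand t₁ t₂ => ADT.size t₁ + ADT.size t₂
  | .andA t₁ t₂ => ADT.size t₁ + ADT.size t₂
  | .cm t₁ t₂ => ADT.size t₁ + ADT.size t₂


/-- First-order logic on finite words over alphabet `α`: for each letter `a` a unary
predicate `a(x)` ("the letter at position `x` is `a`") and the binary predicate `x < y`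
on positions. Variables are indexed by natural numbers. -/
inductive FO (α : Type) : Type where
  | letter : α → ℕ → FO α
  | lt : ℕ → ℕ → FO α
  | neg : FO α → FO α
  | conj : FO α → FO α → FO α
  | disj : FO α → FO α → FO α
  | ex : ℕ → FO α → FO α
  | all : ℕ → FO α → FO α

/-- Satisfaction of an FO formula in a finite word `w`, with assignment `ρ` of the
variables to positions (positions of `w` are `0, …, w.length - 1`). -/
def FO.sat {α : Type} (w : List α) (ρ : ℕ → ℕ) : FO α → Prop
  | .letter a x => w[ρ x]? = some a
  | .lt x y => ρ x < ρ y
  | .neg φ => ¬ FO.sat w ρ φ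
  | .conj φ ψ => FO.sat w ρ φ ∧ FO.sat w ρ ψ
  | .disj φ ψ => FO.sat w ρ φ ∨ FO.sat w ρ ψ
  | .ex x φ => ∃ i, i < w.length ∧ FO.sat w (Function.update ρ x i) φ
  | .all x φ => ∀ i, i < w.length → FO.sat w (Function.update ρ x i) φ

/-- Size of an FO formula (its length as an expression). -/
def FO.size {α : Type} : FO α → ℕ
  | .letter _ _ => 1
  | .lt _ _ => 1
  | .neg φ => FO.size φ + 1
  | .conj φ ψ => FO.size φ + FO.size ψ + 1
  | .disj φ ψ => FO.size φ + FO.size ψ + 1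
  | .ex _ φ => FO.size φ + 1
  | .all _ φ => FO.size φ + 1

/-- `φ` defines the language `L`: a word belongs to `L` iff it satisfies `φ`
(under every assignment; in particular `φ` behaves as a sentence). -/
def FODefines {α : Type} (φ : FO α) (L : Language α) : Prop :=
  ∀ (w : List α) (ρ : ℕ → ℕ), w ∈ L ↔ FO.sat w ρ φ

/-- Quantifier-free FO formulas. -/
inductive QF {α : Type} : FO α → Prop where
  | letter (a : α) (x : ℕ) : QF (FO.letter a x)
  | lt (x y : ℕ) : QF (FO.lt x y)
  | neg {φ} : QF φ → QF (FO.neg φ)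
  | conj {φ ψ} : QF φ → QF ψ → QF (FO.conj φ ψ)
  | disj {φ ψ} : QF φ → QF ψ → QF (FO.disj φ ψ)

mutual
  /-- `SigmaFO ℓ φ`: `φ` has at most `ℓ` alternating blocks of quantifiers,
  starting with a block of `∃`. -/
  inductive SigmaFO {α : Type} : ℕ → FO α → Prop where
    | qf {n : ℕ} {φ : FO α} : QF φ → SigmaFO n φ
    | ofPi {n : ℕ} {φ : FO α} : PiFO n φ → SigmaFO (n + 1) φ
    | ex {n x : ℕ} {φ : FO α} : SigmaFO (n + 1) φ → SigmaFO (n + 1) (FO.ex x φ)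

  /-- `PiFO ℓ φ`: `φ` has at most `ℓ` alternating blocks of quantifiers,
  starting with a block of `∀`. -/
  inductive PiFO {α : Type} : ℕ → FO α → Prop where
    | qf {n : ℕ} {φ : FO α} : QF φ → PiFO n φ
    | ofSigma {n : ℕ} {φ : FO α} : SigmaFO n φ → PiFO (n + 1) φ
    | all {n x : ℕ} {φ : FO α} : PiFO (n + 1) φ → PiFO (n + 1) (FO.all x φ)
end

/-- A language is `Σ_ℓ`-definable if it is defined by some `Σ_ℓ` sentence. -/
def SigmaDefinable {α : Type} (ℓ : ℕ) (L : Language α) : Prop :=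
  ∃ φ : FO α, SigmaFO ℓ φ ∧ FODefines φ L

/-- A language is `Π_ℓ`-definable if it is defined by some `Π_ℓ` sentence. -/
def PiDefinable {α : Type} (ℓ : ℕ) (L : Language α) : Prop :=
  ∃ φ : FO α, PiFO ℓ φ ∧ FODefines φ L


section Aux
open List in
lemma sublist_def' {β : Type} (u w : List β) : u.Sublist w ↔ u <+ w := Iff.rfl

variable {α : Type}

/-- Sublist characterized by a strictly monotone reindexing valid at every index. -/
lemma sublist_iff_strictMono {u w : List α} :
    u.Sublist w ↔ ∃ f : ℕ → ℕ, StrictMono f ∧ ∀ i, u[i]? = w[f i]? := by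
  rw [List.sublist_iff_exists_orderEmbedding_getElem?_eq]
  constructor
  · rintro ⟨f, hf⟩
    exact ⟨f, f.strictMono, by simpa using hf⟩
  · rintro ⟨f, hf, h⟩
    exact ⟨OrderEmbedding.ofStrictMono f hf, by simpa using h⟩

/-- Quantifier-free formulas transfer along letter- and order-preserving reassignments. -/
lemma qf_transfer {ψ : FO α} (h : QF ψ) {w u : List α} {ρ ρ' : ℕ → ℕ}
    (hlet : ∀ x, w[ρ x]? = u[ρ' x]?)
    (hord : ∀ x y, ρ x < ρ y ↔ ρ' x < ρ' y) :
    FO.sat w ρ ψ ↔ FO.sat u ρ' ψ := by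
  induction h with
  | letter a x => simp only [FO.sat, hlet x]
  | lt x y => exact hord x y
  | neg _ ih => simp only [FO.sat]; rw [ih]
  | conj _ _ ih1 ih2 => simp only [FO.sat]; rw [ih1, ih2]
  | disj _ _ ih1 ih2 => simp only [FO.sat]; rw [ih1, ih2]

/-- A block of existential quantifiers over a quantifier-free formula. -/
inductive ExBlock {α : Type} : FO α → Prop where
  | qf {φ : FO α} : QF φ → ExBlock φ
  | ex {x : ℕ} {φ : FO α} : ExBlock φ → ExBlock (FO.ex x φ)

lemma pi0_qf {φ : FO α} (h : PiFO 0 φ) : QF φ := by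
  cases h with
  | qf h => exact h

lemma sigma1_inv {φ : FO α} (h : SigmaFO 1 φ) :
    QF φ ∨ ∃ x ψ, φ = FO.ex x ψ ∧ SigmaFO 1 ψ := by
  cases h with
  | qf h => exact .inl h
  | ofPi h => exact .inl (pi0_qf h)
  | ex h => exact .inr ⟨_, _, rfl, h⟩

lemma sigma1_exblock {φ : FO α} (h : SigmaFO 1 φ) : ExBlock φ := by
  induction φ with
  | ex x ψ ih =>
    rcases sigma1_inv h with hq | ⟨y, χ, heq, h1⟩
    · exact .qf hq
    · cases heq; exact .ex (ih h1)
  | letter a x =>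
    rcases sigma1_inv h with hq | ⟨y, χ, heq, h1⟩
    · exact .qf hq
    · cases heq
  | lt x y =>
    rcases sigma1_inv h with hq | ⟨y, χ, heq, h1⟩
    · exact .qf hq
    · cases heq
  | neg ψ ih =>
    rcases sigma1_inv h with hq | ⟨y, χ, heq, h1⟩
    · exact .qf hq
    · cases heq
  | conj ψ χ ih1 ih2 =>
    rcases sigma1_inv h with hq | ⟨y, χ', heq, h1⟩
    · exact .qf hq
    · cases heq
  | disj ψ χ ih1 ih2 =>
    rcases sigma1_inv h with hq | ⟨y, χ', heq, h1⟩
    · exact .qf hq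
    · cases heq
  | all x ψ ih =>
    rcases sigma1_inv h with hq | ⟨y, χ, heq, h1⟩
    · exact .qf hq
    · cases heq

/-- Σ₁ formulas are preserved under super-sequences. -/
lemma exblock_mono {φ : FO α} (h : ExBlock φ) :
    ∀ (u w : List α) (f : ℕ → ℕ), StrictMono f → (∀ i, u[i]? = w[f i]?) →
      ∀ ρ, FO.sat u ρ φ → FO.sat w (f ∘ ρ) φ := by
  induction h with
  | qf hq =>
    intro u w f hf hfi ρ hs
    exact (qf_transfer hq (fun x => hfi (ρ x)) (fun x y => (hf.lt_iff_lt).symm)).mp hs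
  | @ex x ψ h ih =>
    intro u w f hf hfi ρ hs
    obtain ⟨i, hi, hs⟩ := hs
    have hfi' : f i < w.length := by
      have h1 := hfi i
      rw [List.getElem?_eq_getElem hi] at h1
      obtain ⟨h2, -⟩ := List.getElem?_eq_some_iff.mp h1.symm
      exact h2
    have hmain := ih u w f hf hfi (Function.update ρ x i) hs
    refine ⟨f i, hfi', ?_⟩
    have hcomp : f ∘ Function.update ρ x i = Function.update (f ∘ ρ) x (f i) := by
      funext y; by_cases hy : y = x <;> simp [Function.update, hy]
    rwa [hcomp] at hmain

/-- Small-witness property for Σ₁ formulas. -/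
lemma exblock_small {φ : FO α} (h : ExBlock φ) :
    ∀ (w : List α) (ρ : ℕ → ℕ), FO.sat w ρ φ →
      ∃ S : Finset ℕ, (∀ i ∈ S, i < w.length) ∧ S.card ≤ FO.size φ ∧
        ∀ (u : List α) (g : ℕ → ℕ),
          (∀ i, (i ∈ S ∨ ∃ x, ρ x = i) → w[i]? = u[g i]?) →
          (∀ i j, (i ∈ S ∨ ∃ x, ρ x = i) → (j ∈ S ∨ ∃ x, ρ x = j) → (i < j ↔ g i < g j)) →
          FO.sat u (g ∘ ρ) φ := by
  induction h with
  | qf hq =>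
    intro w ρ hs
    refine ⟨∅, by simp, Nat.zero_le _, ?_⟩
    intro u g hlet hord
    exact (qf_transfer hq (fun x => hlet (ρ x) (.inr ⟨x, rfl⟩))
      (fun x y => hord _ _ (.inr ⟨x, rfl⟩) (.inr ⟨y, rfl⟩))).mp hs
  | @ex x ψ h ih =>
    intro w ρ hs
    obtain ⟨i, hi, hs⟩ := hs
    obtain ⟨S', hS1, hS2, hS3⟩ := ih w (Function.update ρ x i) hs
    refine ⟨insert i S', ?_, ?_, ?_⟩
    · intro j hj
      rcases Finset.mem_insert.mp hj with rfl | hj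
      · exact hi
      · exact hS1 j hj
    · calc (insert i S').card ≤ S'.card + 1 := Finset.card_insert_le _ _
        _ ≤ FO.size ψ + 1 := by omega
    · intro u g hlet hord
      have hsub : ∀ j, (j ∈ S' ∨ ∃ y, Function.update ρ x i y = j) →
          (j ∈ insert i S' ∨ ∃ y, ρ y = j) := by
        intro j hj
        rcases hj with hj | ⟨y, hy⟩
        · exact .inl (Finset.mem_insert_of_mem hj)
        · by_cases hyx : y = x
          · subst hyx
            rw [Function.update_self] at hy
            exact .inl (by rw [← hy]; exact Finset.mem_insert_self _ _)
          · rw [Function.update_of_ne hyx] at hy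
            exact .inr ⟨y, hy⟩
      have hmain := hS3 u g (fun j hj => hlet j (hsub j hj))
        (fun a b ha hb => hord a b (hsub a ha) (hsub b hb))
      have hgi : g i < u.length := by
        have h1 := hlet i (.inl (Finset.mem_insert_self _ _))
        rw [List.getElem?_eq_getElem hi] at h1
        obtain ⟨h2, -⟩ := List.getElem?_eq_some_iff.mp h1.symm
        exact h2
      refine ⟨g i, hgi, ?_⟩
      have hcomp : g ∘ Function.update ρ x i = Function.update (g ∘ ρ) x (g i) := by
        funext y; by_cases hy : y = x <;> simp [Function.update, hy]
      rwa [hcomp] at hmain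

/-- Extraction of the subsequence of `w` along a set `S` of positions, together with
a position-translation map. -/
lemma extract [Inhabited α] {w : List α} {S : Finset ℕ} (hS : ∀ i ∈ S, i < w.length) :
    ∃ (u : List α) (g : ℕ → ℕ), u.Sublist w ∧ u.length = S.card ∧
      (∀ i, (i ∈ S ∨ i = w.length) → w[i]? = u[g i]?) ∧
      (∀ i j, (i ∈ S ∨ i = w.length) → (j ∈ S ∨ j = w.length) → (i < j ↔ g i < g j)) := by
  classical
  set ts : List ℕ := S.sort (· ≤ ·) with hts
  have hmem : ∀ i, i ∈ ts ↔ i ∈ S := fun i => Finset.mem_sort _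
  have hlen : ts.length = S.card := Finset.length_sort _
  have hsorted : ts.SortedLT := Finset.sortedLT_sort S
  have hgetmono : ∀ {p q : ℕ} (hp : p < ts.length) (hq : q < ts.length),
      p < q → ts[p] < ts[q] := by
    intro p q hp hq hpq
    exact List.SortedLT.strictMono_get hsorted (a := ⟨p, hp⟩) (b := ⟨q, hq⟩) hpq
  have hbound : ∀ {p : ℕ} (hp : p < ts.length), ts[p] < w.length := by
    intro p hp
    exact hS _ ((hmem _).mp (List.getElem_mem hp))
  refine ⟨ts.map (fun i => w.getD i default),
    fun i => if i ∈ ts then ts.idxOf i else i + ts.length, ?_, ?_, ?_, ?_⟩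
  · rw [sublist_iff_strictMono]
    refine ⟨fun k => if h : k < ts.length then ts[k] else k + w.length, ?_, ?_⟩
    · intro a b hab
      by_cases ha : a < ts.length <;> by_cases hb : b < ts.length <;> simp only [ha, hb,
        dif_pos, dif_neg, not_false_iff]
      · exact hgetmono ha hb hab
      · exact lt_of_lt_of_le (hbound ha) (Nat.le_add_left _ _)
      · omega
      · omega
    · intro k
      dsimp only
      by_cases hk : k < ts.length
      · rw [dif_pos hk, List.getElem?_map, List.getElem?_eq_getElem hk,
          List.getElem?_eq_getElem (hbound hk), Option.map_some]
        rw [List.getD_eq_getElem _ _ (hbound hk)]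
      · rw [dif_neg hk, List.getElem?_eq_none, List.getElem?_eq_none]
        · omega
        · simp only [List.length_map]; omega
  · simp [hlen]
  · intro i hi
    dsimp only
    rcases hi with hi | rfl
    · have hits : i ∈ ts := (hmem i).mpr hi
      have hidx : ts.idxOf i < ts.length := List.idxOf_lt_length_iff.mpr hits
      rw [if_pos hits, List.getElem?_map, List.getElem?_eq_getElem hidx,
        Option.map_some, List.getElem_idxOf hidx,
        List.getD_eq_getElem _ _ (hS i hi), List.getElem?_eq_getElem (hS i hi)]
    · have hnot : w.length ∉ ts := by
        intro hcon
        exact absurd (hS _ ((hmem _).mp hcon)) (lt_irrefl _)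
      rw [if_neg hnot, List.getElem?_eq_none (le_refl _), List.getElem?_eq_none]
      simp only [List.length_map]; omega
  · have key : ∀ i, (i ∈ S ∨ i = w.length) → ∀ j, (j ∈ S ∨ j = w.length) →
        i < j → (if i ∈ ts then ts.idxOf i else i + ts.length) <
          (if j ∈ ts then ts.idxOf j else j + ts.length) := by
      intro i hi j hj hij
      rcases hi with hi | rfl <;> rcases hj with hj | rfl
      · have hits : i ∈ ts := (hmem i).mpr hi
        have hjts : j ∈ ts := (hmem j).mpr hj
        have hidx : ts.idxOf i < ts.length := List.idxOf_lt_length_iff.mpr hits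
        have hjdx : ts.idxOf j < ts.length := List.idxOf_lt_length_iff.mpr hjts
        rw [if_pos hits, if_pos hjts]
        by_contra hcon
        push_neg at hcon
        rcases Nat.lt_or_ge (ts.idxOf j) (ts.idxOf i) with hlt | hge
        · have := hgetmono hjdx hidx hlt
          rw [List.getElem_idxOf hidx, List.getElem_idxOf hjdx] at this
          omega
        · have heq : ts.idxOf i = ts.idxOf j := by omega
          have hieq : i = j := (List.idxOf_inj hits).mp heq
          omega
      · have hits : i ∈ ts := (hmem i).mpr hi
        have hnot : w.length ∉ ts := fun hcon =>
          absurd (hS _ ((hmem _).mp hcon)) (lt_irrefl _)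
        have hidx : ts.idxOf i < ts.length := List.idxOf_lt_length_iff.mpr hits
        rw [if_pos hits, if_neg hnot]
        omega
      · exact absurd (hS j hj) (by omega)
      · omega
    intro i j hi hj
    dsimp only
    constructor
    · exact key i hi j hj
    · intro hgij
      rcases Nat.lt_trichotomy i j with h | h | h
      · exact h
      · subst h; omega
      · exact absurd (key j hj i hi h) (by omega)

end Aux

section ADTconstr

open Classical in
/-- A propositional formula characterizing the single valuation `a`. -/
noncomputable def letterForm {P : Type} [Fintype P] (a : Val P) : PropForm P :=
  (Finset.univ : Finset P).toList.foldr
    (fun p acc => .conj (if p ∈ a then .var p else .neg (.var p)) acc) .tru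

lemma eval_letterForm {P : Type} [Fintype P] (a v : Val P) :
    PropForm.eval v (letterForm a) ↔ v = a := by
  classical
  have key : ∀ l : List P,
      PropForm.eval v (l.foldr
        (fun p acc => .conj (if p ∈ a then .var p else .neg (.var p)) acc) .tru) ↔
      ∀ p ∈ l, (p ∈ v ↔ p ∈ a) := by
    intro l
    induction l with
    | nil => simp [PropForm.eval]
    | cons p l ih =>
      simp only [List.foldr_cons, PropForm.eval, ih, List.mem_cons]
      by_cases hp : p ∈ a
      · simp only [if_pos hp, PropForm.eval]
        constructor
        · rintro ⟨h1, h2⟩ q hq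
          rcases hq with rfl | hq
          · exact ⟨fun _ => hp, fun _ => h1⟩
          · exact h2 q hq
        · intro h
          exact ⟨(h p (.inl rfl)).mpr hp, fun q hq => h q (.inr hq)⟩
      · simp only [if_neg hp, PropForm.eval]
        constructor
        · rintro ⟨h1, h2⟩ q hq
          rcases hq with rfl | hq
          · exact ⟨fun hv => absurd hv h1, fun ha => absurd ha hp⟩
          · exact h2 q hq
        · intro h
          exact ⟨fun hv => hp ((h p (.inl rfl)).mp hv), fun q hq => h q (.inr hq)⟩
  rw [letterForm, key]
  constructor
  · intro h
    ext p
    exact h p (by simp)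
  · rintro rfl p _
    exact Iff.rfl

/-- The adt whose semantics is the upward closure (w.r.t. subword order) of a word. -/
noncomputable def wordADT {P : Type} [Fintype P] : List (Val P) → ADT P
  | [] => .orA .eps (.leaf .tru)
  | a :: l => .sand (.leaf (letterForm a)) (wordADT l)

lemma cd_wordADT {P : Type} [Fintype P] (l : List (Val P)) : cd (wordADT l) = 0 := by
  induction l with
  | nil => simp [wordADT, cd]
  | cons a l ih => simp [wordADT, cd, ih]

lemma cons_sublist_iff'' {a : β} {l w : List β} :
    (a :: l).Sublist w ↔ ∃ y z, w = y ++ a :: z ∧ l.Sublist z := by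
  constructor
  · intro h
    induction w with
    | nil => exact absurd h (by simp)
    | cons b w ih =>
      rcases List.cons_sublist_cons'.mp h with h' | ⟨rfl, h'⟩
      · obtain ⟨y, z, rfl, hz⟩ := ih h'
        exact ⟨b :: y, z, rfl, hz⟩
      · exact ⟨[], w, rfl, h'⟩
  · rintro ⟨y, z, rfl, hz⟩
    exact List.Sublist.trans (List.cons_sublist_cons.mpr hz)
      (List.sublist_append_right y (a :: z))

lemma sem_wordADT {P : Type} [Fintype P] (l : List (Val P)) :
    sem (wordADT l) = {w | l.Sublist w} := by
  induction l with
  | nil =>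
    ext w
    simp only [wordADT, sem]
    constructor
    · intro _
      exact List.nil_sublist w
    · intro _
      rcases w.eq_nil_or_concat with rfl | ⟨w', v, rfl⟩
      · exact Or.inl Language.nil_mem_one
      · exact Or.inr ⟨w', v, List.concat_eq_append, trivial⟩
  | cons a l ih =>
    ext w
    simp only [wordADT, sem, ih]
    constructor
    · rintro ⟨y, ⟨y', v, rfl, hv⟩, z, hz, rfl⟩
      rw [eval_letterForm] at hv
      subst hv
      change (v :: l).Sublist _
      rw [cons_sublist_iff'']
      exact ⟨y', z, by simp, hz⟩
    · intro hw
      change (a :: l).Sublist w at hw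
      rw [cons_sublist_iff''] at hw
      obtain ⟨y, z, rfl, hz⟩ := hw
      exact ⟨y ++ [a], ⟨y, a, rfl, (eval_letterForm a a).mpr rfl⟩, z, hz, by simp⟩

/-- Finite disjunction of adts. -/
def listOr {P : Type} : List (ADT P) → ADT P
  | [] => .leaf .fls
  | t :: ts => .orA t (listOr ts)

lemma cd_listOr {P : Type} (ts : List (ADT P)) (h : ∀ t ∈ ts, cd t = 0) :
    cd (listOr ts) = 0 := by
  induction ts with
  | nil => simp [listOr, cd]
  | cons t ts ih =>
    simp only [listOr, cd]
    rw [h t (by simp), ih (fun t' ht' => h t' (by simp [ht']))]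
    simp

lemma sem_listOr {P : Type} (ts : List (ADT P)) :
    sem (listOr ts) = {w | ∃ t ∈ ts, w ∈ sem t} := by
  induction ts with
  | nil =>
    ext w
    simp [listOr, sem, PropForm.eval]
  | cons t ts ih =>
    ext w
    simp only [listOr, sem, ih]
    constructor
    · rintro (hw | hw)
      · exact ⟨t, by simp, hw⟩
      · obtain ⟨t', ht', hw⟩ := hw
        exact ⟨t', by simp [ht'], hw⟩
    · rintro ⟨t', ht', hw⟩
      rcases List.mem_cons.mp ht' with rfl | ht'
      · exact Or.inl hw
      · exact Or.inr ⟨t', ht', hw⟩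

end ADTconstr

/-- Every `Σ₁`-definable language over `Σ = 2^P` is ADT₀-definable. -/
theorem sigma1_to_ADT0 {P : Type} [Fintype P] (L : Language (Val P))
    (hL : SigmaDefinable 1 L) :
    ∃ t : ADT P, cd t = 0 ∧ sem t = L := by
  classical
  obtain ⟨φ, hσ, hdef⟩ := hL
  have hEx := sigma1_exblock hσ
  have hfinset : Finite (Val P) := inferInstance
  have hfin : {u : Trace P | u.length ≤ FO.size φ ∧ u ∈ L}.Finite :=
    (List.finite_length_le _ (FO.size φ)).subset (fun u hu => hu.1)
  refine ⟨listOr (hfin.toFinset.toList.map wordADT), ?_, ?_⟩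
  · apply cd_listOr
    intro t ht
    obtain ⟨u, -, rfl⟩ := List.mem_map.mp ht
    exact cd_wordADT u
  · ext w
    rw [sem_listOr]
    constructor
    · rintro ⟨t, ht, hw⟩
      obtain ⟨u, hu, rfl⟩ := List.mem_map.mp ht
      rw [sem_wordADT] at hw
      have huL : u ∈ L := ((hfin.mem_toFinset).mp (Finset.mem_toList.mp hu)).2
      obtain ⟨f, hf, hfi⟩ := sublist_iff_strictMono.mp hw
      exact (hdef w (f ∘ id)).mpr (exblock_mono hEx u w f hf hfi id ((hdef u id).mp huL))
    · intro hw
      have hs := (hdef w (fun _ => w.length)).mp hw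
      obtain ⟨S, hS1, hS2, hS3⟩ := exblock_small hEx w _ hs
      obtain ⟨u, g, hsub, hulen, hletter, horder⟩ := extract hS1
      have conv' : ∀ i : ℕ, (i ∈ S ∨ ∃ x : ℕ, (fun _ : ℕ => w.length) x = i) →
          (i ∈ S ∨ i = w.length) := by
        rintro i (hi | ⟨x, hx⟩)
        · exact .inl hi
        · exact .inr hx.symm
      have hsat : FO.sat u (g ∘ fun _ => w.length) φ :=
        hS3 u g (fun i hi => hletter i (conv' i hi))
          (fun i j hi hj => horder i j (conv' i hi) (conv' j hj))
      have huL : u ∈ L := (hdef u _).mpr hsat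
      have humem : u ∈ hfin.toFinset.toList :=
        Finset.mem_toList.mpr (hfin.mem_toFinset.mpr ⟨by omega, huL⟩)
      exact ⟨wordADT u, List.mem_map.mpr ⟨u, humem, rfl⟩,
        by rw [sem_wordADT]; exact hsub⟩

end ADTpaper
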